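/- For every intermediate field L with K(f) ⊆ L ⊆ K(t) there exists a unique partition P_L of {1, …, r} such that every P_L-product has all coefficients in L and the number of parts of P_L is maximal with this property. Moreover, every partition Q of {1, …, r} all of whose Q-products have coefficients in L is a coarsening of P_L (P_L refines Q), and the parts of P_L correspond exactly to the monic irreducible factors of Φ_f over L: each such irreducible factor equals the product of the F_j with j in one part of P_L. -/
import Mathlib


open Polynomial

/-- `Φ_f(x) := f_n(x) − f(t)·f_d(x) ∈ K(t)[x]`, where `f = f_n/f_d` with `f_n, f_d` coprime. -/
noncomputable def Phi {K : Type*} [Field K] (g : RatFunc K) : Polynomial (RatFunc K) :=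
  g.num.map (algebraMap K (RatFunc K)) - Polynomial.C g * (g.denom.map (algebraMap K (RatFunc K)))

/-- A rational function is nonconstant if it is not of the form `C c`. -/
def Nonconst {K : Type*} [Field K] (g : RatFunc K) : Prop := ∀ c : K, g ≠ RatFunc.C c

/-- All the `P`-products `∏_{j ∈ A} F_j`, for `A` a part of the partition `P`, have all
their coefficients in the set `L`. -/
def ProdsIn {K : Type*} [Field K] {r : ℕ} (F : Fin r → Polynomial (RatFunc K))
    (L : Set (RatFunc K)) (P : Finpartition (Finset.univ : Finset (Fin r))) : Prop :=
  ∀ A ∈ P.parts, ∀ m, (∏ j ∈ A, F j).coeff m ∈ L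

section Aux

variable {E : Type*} [Field E] {r : ℕ} {F : Fin r → Polynomial E}

/-- If `F j` divides a product of the (distinct, monic, irreducible) `F k`, `k ∈ A`,
then `j ∈ A`. -/
lemma mem_of_dvd_prod_aux (hFm : ∀ j, (F j).Monic) (hFirr : ∀ j, Irreducible (F j))
    (hFinj : Function.Injective F) {A : Finset (Fin r)} {j : Fin r}
    (h : F j ∣ ∏ k ∈ A, F k) : j ∈ A := by
  obtain ⟨k, hk, hdvd⟩ := (hFirr j).prime.exists_mem_finset_dvd h
  have hjk : F j = F k := eq_of_monic_of_associated (hFm j) (hFm k)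
    ((hFirr j).associated_of_dvd (hFirr k) hdvd)
  rw [hFinj hjk]
  exact hk

/-- Every nonunit nonzero polynomial over a field has a monic irreducible factor. -/
lemma exists_monic_irreducible_factor_aux {g : Polynomial E} (hgu : ¬IsUnit g) (hg0 : g ≠ 0) :
    ∃ q : Polynomial E, q.Monic ∧ Irreducible q ∧ q ∣ g := by
  obtain ⟨p, hpi, hpd⟩ := WfDvdMonoid.exists_irreducible_factor hgu hg0
  have hU : IsUnit (C p.leadingCoeff⁻¹ : Polynomial E) :=
    isUnit_C.mpr (isUnit_iff_ne_zero.mpr (inv_ne_zero (leadingCoeff_ne_zero.mpr hpi.ne_zero)))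
  exact ⟨p * C p.leadingCoeff⁻¹, monic_mul_leadingCoeff_inv hpi.ne_zero,
    ((associated_mul_unit_right p _ hU).irreducible hpi),
    ((associated_mul_unit_right p _ hU).symm.dvd).trans hpd⟩

/-- The monic divisors of a squarefree product of distinct monic irreducible polynomials
are exactly the subproducts. -/
lemma dvd_prod_structure_aux (hFm : ∀ j, (F j).Monic) (hFirr : ∀ j, Irreducible (F j))
    (hFinj : Function.Injective F) :
    ∀ s : Finset (Fin r), ∀ g : Polynomial E, g.Monic → g ∣ ∏ j ∈ s, F j →
      ∃ A ⊆ s, g = ∏ j ∈ A, F j := by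
  intro s
  induction s using Finset.strongInduction with
  | _ s ih =>
    intro g hg hdvd
    by_cases hu : IsUnit g
    · exact ⟨∅, Finset.empty_subset s, by simpa using hg.eq_one_of_isUnit hu⟩
    · obtain ⟨q, hqm, hqi, hqd⟩ := exists_monic_irreducible_factor_aux hu hg.ne_zero
      obtain ⟨k, hk, hdk⟩ := hqi.prime.exists_mem_finset_dvd (hqd.trans hdvd)
      have hqF : q = F k := eq_of_monic_of_associated hqm (hFm k)
        (hqi.associated_of_dvd (hFirr k) hdk)
      rw [hqF] at hqd
      obtain ⟨c, hc⟩ := hqd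
      have hcm : c.Monic := (hFm k).of_mul_monic_left (hc ▸ hg)
      have hcd : c ∣ ∏ j ∈ s.erase k, F j := by
        have h1 : F k * c ∣ F k * ∏ j ∈ s.erase k, F j := by
          rw [Finset.mul_prod_erase s F hk, ← hc]; exact hdvd
        exact (mul_dvd_mul_iff_left (hFm k).ne_zero).mp h1
      obtain ⟨A', hA's, hA'⟩ := ih (s.erase k) (Finset.erase_ssubset hk) c hcm hcd
      have hkA' : k ∉ A' := fun h => (Finset.mem_erase.mp (hA's h)).1 rfl
      refine ⟨insert k A',
        Finset.insert_subset hk (hA's.trans (Finset.erase_subset k s)), ?_⟩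
      rw [Finset.prod_insert hkA', ← hA']
      exact hc

/-- If every part of `P` is contained in a part of `Q`, then `Q` has at most as many
parts as `P`. -/
lemma refines_card_le_aux {α : Type*} [DecidableEq α] [Fintype α]
    {P Q : Finpartition (Finset.univ : Finset α)}
    (h : ∀ A ∈ P.parts, ∃ B ∈ Q.parts, A ⊆ B) : Q.parts.card ≤ P.parts.card := by
  classical
  choose g hg1 hg2 using h
  have hf : Set.SurjOn (fun A => if h' : A ∈ P.parts then g A h' else ∅)
      (↑P.parts) (↑Q.parts) := by
    intro B hB
    have hB' : B ∈ Q.parts := hB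
    obtain ⟨x, hx⟩ := Q.nonempty_of_mem_parts hB'
    obtain ⟨A, hA, hxA⟩ := P.exists_mem (Finset.mem_univ x)
    refine ⟨A, hA, ?_⟩
    simp only [dif_pos hA]
    exact Q.eq_of_mem_parts (hg1 A hA) hB' (hg2 A hA hxA) hx
  exact Finset.card_le_card_of_surjOn _ hf

/-- A refinement with at least as many parts on the coarse side is an equality. -/
lemma refines_eq_aux {α : Type*} [DecidableEq α] [Fintype α]
    {P Q : Finpartition (Finset.univ : Finset α)}
    (h : ∀ A ∈ P.parts, ∃ B ∈ Q.parts, A ⊆ B) (hcard : P.parts.card ≤ Q.parts.card) :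
    P = Q := by
  classical
  choose g hg1 hg2 using h
  have hsurj : ∀ B ∈ Q.parts, ∃ A, ∃ hA : A ∈ P.parts, g A hA = B := by
    intro B hB
    obtain ⟨x, hx⟩ := Q.nonempty_of_mem_parts hB
    obtain ⟨A, hA, hxA⟩ := P.exists_mem (Finset.mem_univ x)
    exact ⟨A, hA, Q.eq_of_mem_parts (hg1 A hA) hB (hg2 A hA hxA) hx⟩
  have hinj := Finset.inj_on_of_surj_on_of_card_le g hg1 hsurj hcard
  have hsub : P.parts ⊆ Q.parts := by
    intro A hA
    have hBA : g A hA ⊆ A := by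
      intro x hxB
      obtain ⟨A', hA', hxA'⟩ := P.exists_mem (Finset.mem_univ x)
      have heq : g A' hA' = g A hA :=
        Q.eq_of_mem_parts (hg1 A' hA') (hg1 A hA) (hg2 A' hA' hxA') hxB
      have hAA : A' = A := hinj hA' hA heq
      rw [← hAA]
      exact hxA'
    have hAg : A = g A hA := Finset.Subset.antisymm (hg2 A hA) hBA
    rw [hAg]
    exact hg1 A hA
  have hparts : P.parts = Q.parts :=
    Finset.eq_of_subset_of_card_le hsub (refines_card_le_aux fun A hA => ⟨g A hA, hg1 A hA, hg2 A hA⟩)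
  exact Finpartition.ext hparts

/-- The key construction: a monic polynomial over a subfield whose image is a subproduct of
the `F j` gives rise to a partition into monic irreducible pieces over the subfield. -/
lemma build_partition_aux {E' : Type*} [Field E'] (alg : E' →+* E)
    (hFm : ∀ j, (F j).Monic) (hFirr : ∀ j, Irreducible (F j))
    (hFinj : Function.Injective F) :
    ∀ s : Finset (Fin r), ∀ φ : Polynomial E', φ.Monic → φ.map alg = ∏ j ∈ s, F j →
      ∃ P : Finpartition s, ∀ A ∈ P.parts, ∃ q : Polynomial E', q.Monic ∧ Irreducible q ∧
        q.map alg = ∏ j ∈ A, F j := by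
  have hinj : Function.Injective alg := alg.injective
  intro s
  induction s using Finset.strongInduction with
  | _ s ih =>
    intro φ hφ hmap
    by_cases hu : IsUnit φ
    · have hs : s = ∅ := by
        by_contra hne
        obtain ⟨j, hj⟩ := Finset.nonempty_iff_ne_empty.mpr hne
        have h1 : F j ∣ (1 : Polynomial E) := by
          rw [hφ.eq_one_of_isUnit hu, Polynomial.map_one] at hmap
          rw [hmap]
          exact Finset.dvd_prod_of_mem F hj
        exact (hFirr j).not_isUnit (isUnit_of_dvd_one h1)
      subst hs
      refine ⟨(Finpartition.empty _).copy rfl, ?_⟩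
      intro A hA
      exact absurd hA (Finset.notMem_empty A)
    · obtain ⟨q, hqm, hqi, hqd⟩ := exists_monic_irreducible_factor_aux hu hφ.ne_zero
      have hqmap : q.map alg ∣ ∏ j ∈ s, F j := by
        rw [← hmap]; exact Polynomial.map_dvd alg hqd
      obtain ⟨A, hAs, hA⟩ :=
        dvd_prod_structure_aux hFm hFirr hFinj s (q.map alg) (hqm.map alg) hqmap
      have hAne : A.Nonempty := by
        rw [Finset.nonempty_iff_ne_empty]
        rintro rfl
        rw [Finset.prod_empty] at hA
        have hq1 : q = 1 := Polynomial.map_injective alg hinj (by rw [hA, Polynomial.map_one])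
        exact hqi.not_isUnit (hq1 ▸ isUnit_one)
      obtain ⟨c, hc⟩ := hqd
      have hcm : c.Monic := hqm.of_mul_monic_left (hc ▸ hφ)
      have hcmap : c.map alg = ∏ j ∈ s \ A, F j := by
        have h1 : q.map alg * c.map alg = q.map alg * ∏ j ∈ s \ A, F j := by
          calc q.map alg * c.map alg = φ.map alg := by rw [← Polynomial.map_mul, ← hc]
          _ = ∏ j ∈ s, F j := hmap
          _ = (∏ j ∈ s \ A, F j) * ∏ j ∈ A, F j := (Finset.prod_sdiff hAs).symm
          _ = q.map alg * ∏ j ∈ s \ A, F j := by rw [hA, mul_comm]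
        exact mul_left_cancel₀ (hqm.map alg).ne_zero h1
      obtain ⟨P', hP'⟩ := ih (s \ A) (Finset.sdiff_ssubset hAs hAne) c hcm hcmap
      refine ⟨P'.extend (b := A) ?_ ?_ ?_, ?_⟩
      · exact hAne.ne_empty
      · exact Finset.sdiff_disjoint
      · rw [Finset.sup_eq_union]; exact Finset.sdiff_union_of_subset hAs
      · intro B hB
        rw [Finpartition.extend_parts, Finset.mem_insert] at hB
        rcases hB with rfl | hB
        · exact ⟨q, hqm, hqi, hA⟩
        · exact hP' B hB

end Aux

/-- For every intermediate field `L` of `K(t)/K(f)` there is a unique partition `P_L`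
of `{1,…,r}` whose products have all coefficients in `L` and whose number of parts is
maximal with this property; every partition `Q` whose products lie in `L[x]` is
coarsened by `P_L`, and the parts of `P_L` correspond exactly to the monic irreducible
factors of `Φ_f` over `L`. -/
theorem stmt_15 {K : Type*} [Field K] (f : RatFunc K) (hf : Nonconst f)
    (hmonic : (Phi f).Monic) (hsep : (Phi f).Separable)
    (r : ℕ) (hr : 0 < r) (F : Fin r → Polynomial (RatFunc K))
    (hFm : ∀ j, (F j).Monic) (hFirr : ∀ j, Irreducible (F j))
    (hfact : Phi f = ∏ j, F j)
    (hF1 : F ⟨0, hr⟩ = Polynomial.X - Polynomial.C RatFunc.X)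
    (L : IntermediateField K (RatFunc K)) (hL : IntermediateField.adjoin K {f} ≤ L) :
    (∃! P : Finpartition (Finset.univ : Finset (Fin r)),
        ProdsIn F (L : Set (RatFunc K)) P ∧
        ∀ Q : Finpartition (Finset.univ : Finset (Fin r)),
          ProdsIn F (L : Set (RatFunc K)) Q → Q.parts.card ≤ P.parts.card) ∧
    ∀ P : Finpartition (Finset.univ : Finset (Fin r)),
      (ProdsIn F (L : Set (RatFunc K)) P ∧
        ∀ Q : Finpartition (Finset.univ : Finset (Fin r)),
          ProdsIn F (L : Set (RatFunc K)) Q → Q.parts.card ≤ P.parts.card) →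
      ((∀ Q : Finpartition (Finset.univ : Finset (Fin r)),
          ProdsIn F (L : Set (RatFunc K)) Q → ∀ A ∈ P.parts, ∃ B ∈ Q.parts, A ⊆ B) ∧
       (∀ A ∈ P.parts, ∃ q : Polynomial L, q.Monic ∧ Irreducible q ∧
          q.map (algebraMap L (RatFunc K)) = ∏ j ∈ A, F j) ∧
       (∀ q : Polynomial L, q.Monic → Irreducible q →
          q.map (algebraMap L (RatFunc K)) ∣ Phi f →
          ∃ A ∈ P.parts, q.map (algebraMap L (RatFunc K)) = ∏ j ∈ A, F j)) := by
  classical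
  have hinjalg : Function.Injective (algebraMap L (RatFunc K)) :=
    (algebraMap (L : IntermediateField K (RatFunc K)) (RatFunc K)).injective
  have hmapinj : Function.Injective (Polynomial.map (algebraMap L (RatFunc K))) :=
    Polynomial.map_injective _ hinjalg
  -- the F j are pairwise distinct
  have hFinj : Function.Injective F := by
    intro j k hjk
    by_contra hne
    have hsq : Squarefree (Phi f) := hsep.squarefree
    have hdvd : F j * F j ∣ Phi f := by
      rw [hfact, ← Finset.mul_prod_erase Finset.univ F (Finset.mem_univ j)]
      have hk : k ∈ Finset.univ.erase j :=
        Finset.mem_erase.mpr ⟨fun h => hne h.symm, Finset.mem_univ k⟩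
      rw [← Finset.mul_prod_erase _ F hk, ← hjk]
      exact mul_dvd_mul_left (F j) (dvd_mul_right (F j) _)
    exact (hFirr j).not_isUnit (hsq (F j) hdvd)
  -- the coefficients of Phi f lie in L
  have hcoeffL : ∀ m, (Phi f).coeff m ∈ L := by
    intro m
    have hfL : f ∈ L := hL (IntermediateField.subset_adjoin K {f} rfl)
    simp only [Phi, Polynomial.coeff_sub, Polynomial.coeff_map, Polynomial.coeff_C_mul]
    exact sub_mem (L.algebraMap_mem _) (mul_mem hfL (L.algebraMap_mem _))
  -- lift Phi f to a monic polynomial φ over L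
  obtain ⟨φ, hφmap, -, hφm⟩ := Polynomial.lifts_and_degree_eq_and_monic (p := Phi f)
    ((Polynomial.lifts_iff_coeff_lifts (f := algebraMap L (RatFunc K)) (Phi f)).mpr
      fun n => ⟨⟨(Phi f).coeff n, hcoeffL n⟩, rfl⟩)
    hmonic
  have hφprod : φ.map (algebraMap L (RatFunc K)) = ∏ j, F j := by rw [hφmap, hfact]
  -- build P_L
  obtain ⟨PL, hPL⟩ := build_partition_aux (algebraMap L (RatFunc K)) hFm hFirr hFinj
    Finset.univ φ hφm hφprod
  have hPLprods : ProdsIn F (L : Set (RatFunc K)) PL := by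
    intro A hA m
    obtain ⟨q, hqm, hqi, hqmap⟩ := hPL A hA
    rw [← hqmap, Polynomial.coeff_map]
    exact SetLike.coe_mem (q.coeff m)
  -- combining the products over the parts of any partition gives the full product
  have hprodparts : ∀ Q : Finpartition (Finset.univ : Finset (Fin r)),
      ∏ B ∈ Q.parts, ∏ j ∈ B, F j = ∏ j, F j := by
    intro Q
    conv_rhs => rw [← Q.sup_parts]
    rw [Finset.sup_eq_biUnion, Finset.prod_biUnion Q.supIndep.pairwiseDisjoint]
    rfl
  -- lift the Q-products
  have hlift : ∀ Q : Finpartition (Finset.univ : Finset (Fin r)),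
      ProdsIn F (L : Set (RatFunc K)) Q → ∀ B ∈ Q.parts,
      ∃ ψ : Polynomial L, ψ.Monic ∧ ψ.map (algebraMap L (RatFunc K)) = ∏ j ∈ B, F j := by
    intro Q hQ B hB
    obtain ⟨ψ, h1, -, h3⟩ := Polynomial.lifts_and_degree_eq_and_monic
      (p := ∏ j ∈ B, F j)
      ((Polynomial.lifts_iff_coeff_lifts (f := algebraMap L (RatFunc K)) (∏ j ∈ B, F j)).mpr
        fun n => ⟨⟨_, hQ B hB n⟩, rfl⟩)
      (monic_prod_of_monic _ _ fun j _ => hFm j)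
    exact ⟨ψ, h3, h1⟩
  -- any partition with irreducible parts refines any partition with products in L
  have key : ∀ P : Finpartition (Finset.univ : Finset (Fin r)),
      (∀ A ∈ P.parts, ∃ q : Polynomial L, q.Monic ∧ Irreducible q ∧
        q.map (algebraMap L (RatFunc K)) = ∏ j ∈ A, F j) →
      ∀ Q, ProdsIn F (L : Set (RatFunc K)) Q → ∀ A ∈ P.parts, ∃ B ∈ Q.parts, A ⊆ B := by
    intro P hP Q hQ A hA
    obtain ⟨q, hqm, hqi, hqmap⟩ := hP A hA
    choose ψ hψm hψmap using hlift Q hQ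
    have hprodψ : (∏ B ∈ Q.parts.attach, ψ B.1 B.2).map (algebraMap L (RatFunc K))
        = ∏ j, F j := by
      rw [Polynomial.map_prod, ← hprodparts Q,
        ← Finset.prod_attach Q.parts (fun B => ∏ j ∈ B, F j)]
      exact Finset.prod_congr rfl fun B _ => hψmap B.1 B.2
    have hqdvd : q ∣ ∏ B ∈ Q.parts.attach, ψ B.1 B.2 := by
      rw [← Polynomial.map_dvd_map (algebraMap L (RatFunc K)) hinjalg hqm, hprodψ, hqmap]
      exact Finset.prod_dvd_prod_of_subset A Finset.univ F (Finset.subset_univ A)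
    obtain ⟨B, hBmem, hqB⟩ := hqi.prime.exists_mem_finset_dvd hqdvd
    refine ⟨B.1, B.2, ?_⟩
    intro j hj
    apply mem_of_dvd_prod_aux hFm hFirr hFinj (A := B.1)
    have h1 : F j ∣ q.map (algebraMap L (RatFunc K)) := by
      rw [hqmap]; exact Finset.dvd_prod_of_mem F hj
    have h2 := Polynomial.map_dvd (algebraMap L (RatFunc K)) hqB
    rw [hψmap B.1 B.2] at h2
    exact h1.trans h2
  have hPLmax : ∀ Q, ProdsIn F (L : Set (RatFunc K)) Q → Q.parts.card ≤ PL.parts.card :=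
    fun Q hQ => refines_card_le_aux (key PL hPL Q hQ)
  have hPeq : ∀ P : Finpartition (Finset.univ : Finset (Fin r)),
      ProdsIn F (L : Set (RatFunc K)) P →
      (∀ Q, ProdsIn F (L : Set (RatFunc K)) Q → Q.parts.card ≤ P.parts.card) → P = PL := by
    intro P hP hPmax
    exact (refines_eq_aux (key PL hPL P hP) (hPmax PL hPLprods)).symm
  constructor
  · exact ⟨PL, ⟨hPLprods, hPLmax⟩, fun P hP => hPeq P hP.1 hP.2⟩
  · intro P hP
    have hPPL : P = PL := hPeq P hP.1 hP.2
    subst hPPL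
    refine ⟨key P hPL, hPL, ?_⟩
    intro q hqm hqi hqdvd
    choose qA hqAm hqAi hqAmap using hPL
    have hφeq : φ = ∏ A ∈ P.parts.attach, qA A.1 A.2 := by
      apply hmapinj
      rw [Polynomial.map_prod, hφprod, ← hprodparts P,
        ← Finset.prod_attach P.parts (fun B => ∏ j ∈ B, F j)]
      exact Finset.prod_congr rfl fun A _ => (hqAmap A.1 A.2).symm
    have hqφ : q ∣ φ := by
      rw [← Polynomial.map_dvd_map (algebraMap L (RatFunc K)) hinjalg hqm, hφmap]
      exact hqdvd
    rw [hφeq] at hqφ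
    obtain ⟨A, hAmem, hqA'⟩ := hqi.prime.exists_mem_finset_dvd hqφ
    refine ⟨A.1, A.2, ?_⟩
    have hq : q = qA A.1 A.2 := eq_of_monic_of_associated hqm (hqAm A.1 A.2)
      (hqi.associated_of_dvd (hqAi A.1 A.2) hqA')
    rw [hq, hqAmap A.1 A.2]
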